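/- Let A be a basis of a matroid M on a linearly ordered set E, let a ∈ IP(A), and let d be the maximum element of E such that D := (A \ {a}) ∪ {d} is a basis with d ≠ a. Then D <_{ext/int} A and IA(A) ⊆ IA(D). -/

import Mathlib

open Set

variable {α : Type*}

/-- A circuit of a matroid: a minimal dependent set. -/
def Matroid.Cct (M : Matroid α) (C : Set α) : Prop :=
  M.Dep C ∧ ∀ D ⊂ C, ¬ M.Dep D

/-- The externally active elements with respect to `S`: elements `e ∈ E \ S` that are the
maximum of some circuit contained in `S ∪ {e}`. -/
def Matroid.exA [LinearOrder α] (M : Matroid α) (S : Set α) : Set α :=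
  {e | e ∈ M.E \ S ∧ ∃ C, M.Cct C ∧ C ⊆ insert e S ∧ ∀ f ∈ C, f ≤ e}

/-- The externally passive elements with respect to `S`. -/
def Matroid.exP [LinearOrder α] (M : Matroid α) (S : Set α) : Set α :=
  (M.E \ S) \ M.exA S

/-- The internally active elements with respect to `S`: elements of `S` that are externally
active with respect to `E \ S` in the dual matroid. -/
def Matroid.inA [LinearOrder α] (M : Matroid α) (S : Set α) : Set α :=
  {i | i ∈ S ∧ i ∈ M✶.exA (M.E \ S)}

/-- The internally passive elements with respect to `S`. -/
def Matroid.inP [LinearOrder α] (M : Matroid α) (S : Set α) : Set α :=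
  S \ M.inA S

/-- `I` is internally related to the basis `B` if `I = B \ Y` for some `Y ⊆ IA(B)`. -/
def Matroid.IntRelated [LinearOrder α] (M : Matroid α) (I B : Set α) : Prop :=
  M.IsBase B ∧ ∃ Y ⊆ M.inA B, I = B \ Y

/-- The external/internal order on independent sets. -/
def Matroid.extIntLE [LinearOrder α] (M : Matroid α) (I J : Set α) : Prop :=
  ((∃ B, M.IntRelated I B ∧ M.IntRelated J B) ∧ I ⊆ J) ∨
  ((¬ ∃ B, M.IntRelated I B ∧ M.IntRelated J B) ∧
    (I \ M.inA I) ∪ M.exA I ⊆ (J \ M.inA J) ∪ M.exA J)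

namespace Matroid

variable {M : Matroid α} {B C C₁ C₂ X : Set α} {a e f : α}

lemma Cct.subset_ground (hC : M.Cct C) : C ⊆ M.E := hC.1.subset_ground

lemma Cct.diff_singleton_indep (hC : M.Cct C) (he : e ∈ C) : M.Indep (C \ {e}) := by
  have h := hC.2 (C \ {e}) (sdiff_singleton_ssubset.mpr he)
  rwa [not_dep_iff (diff_subset.trans hC.subset_ground)] at h

lemma Cct.mem_closure (hC : M.Cct C) (he : e ∈ C) : e ∈ M.closure (C \ {e}) :=
  ((hC.diff_singleton_indep he).mem_closure_iff).mpr (Or.inl (by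
    rw [insert_diff_singleton, insert_eq_of_mem he]; exact hC.1))

lemma exists_cct_aux [M.Finite] : ∀ n (X : Set α), X.ncard ≤ n → M.Dep X → ∃ C ⊆ X, M.Cct C := by
  intro n
  induction n with
  | zero =>
    intro X hX hdep
    have h0 : X = ∅ :=
      (Set.ncard_eq_zero (M.set_finite X hdep.subset_ground)).mp (Nat.le_zero.mp hX)
    exact absurd M.empty_indep (h0 ▸ hdep.not_indep)
  | succ n ih =>
    intro X hX hdep
    by_cases h : ∀ Y ⊂ X, ¬ M.Dep Y
    · exact ⟨X, Subset.rfl, hdep, h⟩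
    · push_neg at h
      obtain ⟨Y, hYX, hYdep⟩ := h
      obtain ⟨C, hCY, hC⟩ := ih Y (by
        have := Set.ncard_lt_ncard hYX (M.set_finite X hdep.subset_ground)
        omega) hYdep
      exact ⟨C, hCY.trans hYX.subset, hC⟩

lemma Dep.exists_cct [M.Finite] (hX : M.Dep X) : ∃ C ⊆ X, M.Cct C :=
  exists_cct_aux X.ncard X le_rfl hX

lemma cct_elim (hC₁ : M.Cct C₁) (hC₂ : M.Cct C₂) (hne : C₁ ≠ C₂) (he₁ : e ∈ C₁) (he₂ : e ∈ C₂) :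
    M.Dep ((C₁ ∪ C₂) \ {e}) := by
  rw [dep_iff]
  refine ⟨fun hX => ?_, diff_subset.trans (union_subset hC₁.subset_ground hC₂.subset_ground)⟩
  have hnss : ¬ C₁ ⊆ C₂ := fun hss => hC₂.2 C₁ (hss.ssubset_of_ne hne) hC₁.1
  obtain ⟨f, hf1, hf2⟩ := not_subset.mp hnss
  have hfe : f ≠ e := fun h => hf2 (h ▸ he₂)
  have hfX : f ∈ (C₁ ∪ C₂) \ {e} := ⟨Or.inl hf1, hfe⟩
  have h1 : e ∈ M.closure (((C₁ ∪ C₂) \ {e}) \ {f}) := by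
    refine M.closure_subset_closure ?_ (hC₂.mem_closure he₂)
    intro y hy
    exact ⟨⟨Or.inr hy.1, hy.2⟩, fun h => hf2 (mem_singleton_iff.mp h ▸ hy.1)⟩
  have h2 : f ∈ M.closure (insert e (((C₁ ∪ C₂) \ {e}) \ {f})) := by
    refine M.closure_subset_closure ?_ (hC₁.mem_closure hf1)
    intro y hy
    by_cases hye : y = e
    · exact hye ▸ mem_insert _ _
    · exact mem_insert_of_mem _ ⟨⟨Or.inl hy.1, hye⟩, hy.2⟩
  rw [closure_insert_eq_of_mem_closure h1] at h2
  exact hX.notMem_closure_sdiff_of_mem hfX h2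

lemma cct_insert_mem (hB : M.Indep B) (hC : M.Cct C) (hs : C ⊆ insert a B) : a ∈ C := by
  by_contra h
  exact hC.1.not_indep (hB.subset fun x hx =>
    (mem_insert_iff.mp (hs hx)).resolve_left fun hxa => h (hxa ▸ hx))

lemma cct_subset_insert (hB : M.Indep B) (hC₁ : M.Cct C₁) (h₁ : C₁ ⊆ insert a B)
    (hC₂ : M.Cct C₂) (h₂ : C₂ ⊆ insert a B) : C₁ ⊆ C₂ := by
  have ha₁ := cct_insert_mem hB hC₁ h₁
  have ha₂ := cct_insert_mem hB hC₂ h₂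
  intro e he₁
  by_contra he₂
  have hea : e ≠ a := fun h => he₂ (h ▸ ha₂)
  have heB : e ∈ B := (mem_insert_iff.mp (h₁ he₁)).resolve_left hea
  have h1 : a ∈ M.closure (B \ {e}) := by
    refine M.closure_subset_closure ?_ (hC₂.mem_closure ha₂)
    intro y hy
    have hyB : y ∈ B := (mem_insert_iff.mp (h₂ hy.1)).resolve_left
      fun h => hy.2 (mem_singleton_iff.mpr h)
    exact ⟨hyB, fun h => he₂ (mem_singleton_iff.mp h ▸ hy.1)⟩
  have h2 : e ∈ M.closure (insert a (B \ {e})) := by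
    refine M.closure_subset_closure ?_ (hC₁.mem_closure he₁)
    intro y hy
    rcases mem_insert_iff.mp (h₁ hy.1) with h | h
    · exact h ▸ mem_insert _ _
    · exact mem_insert_of_mem _ ⟨h, hy.2⟩
  rw [closure_insert_eq_of_mem_closure h1] at h2
  exact hB.notMem_closure_sdiff_of_mem heB h2

lemma cct_unique (hB : M.Indep B) (hC₁ : M.Cct C₁) (h₁ : C₁ ⊆ insert a B)
    (hC₂ : M.Cct C₂) (h₂ : C₂ ⊆ insert a B) : C₁ = C₂ :=
  (cct_subset_insert hB hC₁ h₁ hC₂ h₂).antisymm (cct_subset_insert hB hC₂ h₂ hC₁ h₁)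

lemma cct_exchange_base [M.Finite] (hB : M.IsBase B) (haE : a ∈ M.E) (haB : a ∉ B)
    (hC : M.Cct C) (hCs : C ⊆ insert a B) (he : e ∈ C) (hea : e ≠ a) :
    M.IsBase (insert a (B \ {e})) := by
  have heB : e ∈ B := (mem_insert_iff.mp (hCs he)).resolve_left hea
  refine hB.exchange_isBase_of_indep haB ?_
  rw [← not_dep_iff (insert_subset haE (diff_subset.trans hB.subset_ground))]
  intro hdep
  obtain ⟨C', hC's, hC'⟩ := hdep.exists_cct
  have hsub : C' ⊆ insert a B :=
    hC's.trans (insert_subset_insert diff_subset)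
  have hCC : C' = C := cct_unique hB.indep hC' hsub hC hCs
  have : e ∈ insert a (B \ {e}) := hC's (hCC ▸ he)
  rcases mem_insert_iff.mp this with h | h
  · exact hea h
  · exact h.2 rfl

lemma mem_cct_of_exchange_base (hC : M.Cct C) (hCs : C ⊆ insert a B)
    (hBase : M.IsBase (insert a (B \ {e}))) (hea : e ≠ a) : e ∈ C := by
  by_contra h
  have hsub : C ⊆ insert a (B \ {e}) := fun x hx => by
    rcases mem_insert_iff.mp (hCs hx) with h' | h'
    · exact h' ▸ mem_insert _ _
    · exact mem_insert_of_mem _ ⟨h', fun hxe => h (mem_singleton_iff.mp hxe ▸ hx)⟩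
  exact hC.1.not_indep (hBase.indep.subset hsub)

lemma exists_fund_cct [M.Finite] (hB : M.IsBase B) (ha : a ∈ M.E) (haB : a ∉ B) :
    ∃ C, M.Cct C ∧ C ⊆ insert a B := by
  obtain ⟨C, hs, hC⟩ := (hB.insert_dep ⟨ha, haB⟩).exists_cct
  exact ⟨C, hC, hs⟩

end Matroid


/-- Let `a ∈ IP(A)` and let `d` be the maximum element such that `D = (A \ {a}) ∪ {d}`
is a basis with `d ≠ a`. Then `D <_{ext/int} A` and `IA(A) ⊆ IA(D)`. -/
theorem max_exchange_lt [LinearOrder α] (M : Matroid α) [M.Finite]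
    (A : Set α) (hA : M.IsBase A) (a : α) (ha : a ∈ M.inP A)
    (d : α) (hda : d ≠ a) (hD : M.IsBase (insert d (A \ {a})))
    (hmax : ∀ d', d' ≠ a → M.IsBase (insert d' (A \ {a})) → d' ≤ d) :
    M.extIntLE (insert d (A \ {a})) A ∧ insert d (A \ {a}) ≠ A ∧
      M.inA A ⊆ M.inA (insert d (A \ {a})) := by
  classical
  set D := insert d (A \ {a}) with hDdef
  have haA : a ∈ A := ha.1
  have haE : a ∈ M.E := hA.subset_ground haA
  have hdE : d ∈ M.E := hD.subset_ground (mem_insert _ _)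
  have haD : a ∉ D := by
    intro h
    rcases mem_insert_iff.mp h with h | h
    · exact hda h.symm
    · exact h.2 rfl
  have hDA : D ≠ A := fun h => haD (h ▸ haA)
  have hdA : d ∉ A := by
    intro h
    exact hDA (hD.eq_of_subset_isBase hA (insert_subset h diff_subset))
  have hcompl : ∀ f, f ∉ A → M.E \ insert f (A \ {a}) = insert a ((M.E \ A) \ {f}) := by
    intro f hfA
    ext x
    simp only [mem_diff, mem_insert_iff, mem_singleton_iff]
    constructor
    · rintro ⟨hxE, hni⟩
      push_neg at hni
      by_cases hxa : x = a
      · exact Or.inl hxa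
      · exact Or.inr ⟨⟨hxE, fun hxA => hxa (hni.2 hxA)⟩, hni.1⟩
    · rintro (rfl | ⟨⟨hxE, hxA⟩, hxf⟩)
      · refine ⟨haE, ?_⟩
        push_neg
        exact ⟨fun h => hfA (h ▸ haA), fun _ => rfl⟩
      · refine ⟨hxE, ?_⟩
        push_neg
        exact ⟨hxf, fun h => absurd h hxA⟩
  have hED : M.E \ D = insert a ((M.E \ A) \ {d}) := hcompl d hdA
  have hins : insert d (M.E \ D) = insert a ((M.E \ A)) := by
    rw [hED, insert_comm, insert_diff_singleton,
      insert_eq_of_mem (show d ∈ M.E \ A from ⟨hdE, hdA⟩)]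
  have hBd : M✶.IsBase (M.E \ A) := hA.compl_isBase_dual
  have hDd : M✶.IsBase (M.E \ D) := hD.compl_isBase_dual
  have haBd : a ∉ M.E \ A := fun h => h.2 haA
  obtain ⟨Ca, hCa, hCas⟩ := Matroid.exists_fund_cct hBd (show a ∈ M✶.E from haE) haBd
  have haCa : a ∈ Ca := Matroid.cct_insert_mem hBd.indep hCa hCas
  have hbase : ∀ f ∈ Ca, f ≠ a → M.IsBase (insert f (A \ {a})) := by
    intro f hf hfa
    have hfBd : f ∈ M.E \ A := (mem_insert_iff.mp (hCas hf)).resolve_left hfa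
    have hb : M✶.IsBase (insert a ((M.E \ A) \ {f})) :=
      Matroid.cct_exchange_base hBd (show a ∈ M✶.E from haE) haBd hCa hCas hf hfa
    have hsub : insert f (A \ {a}) ⊆ M.E :=
      insert_subset hfBd.1 (diff_subset.trans hA.subset_ground)
    rw [← hcompl f hfBd.2] at hb
    rwa [Matroid.dual_isBase_iff diff_subset, diff_diff_cancel_left hsub] at hb
  have hlt : a < d := by
    have hnex : ¬ ∀ f ∈ Ca, f ≤ a := fun hall =>
      ha.2 ⟨haA, ⟨haE, fun h => h.2 haA⟩, Ca, hCa, hCas, hall⟩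
    push_neg at hnex
    obtain ⟨f, hfCa, hfgt⟩ := hnex
    have hfgt' : a < f := hfgt
    exact lt_of_lt_of_le hfgt' (hmax f (ne_of_gt hfgt') (hbase f hfCa (ne_of_gt hfgt')))
  have hfled : ∀ f ∈ Ca, f ≤ d := by
    intro f hf
    by_cases hfa : f = a
    · exact hfa ▸ hlt.le
    · exact hmax f hfa (hbase f hf hfa)
  have hdCa : d ∈ Ca := by
    refine Matroid.mem_cct_of_exchange_base hCa hCas ?_ hda
    rw [← hED]
    exact hDd
  have hdact : d ∈ M.inA D := by
    refine ⟨mem_insert _ _, ⟨hdE, fun h => h.2 (mem_insert _ _)⟩, Ca, hCa, ?_, hfled⟩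
    rw [hins]
    exact hCas
  have hG3 : M.inA A ⊆ M.inA D := by
    rintro i ⟨hiA, hiEx⟩
    obtain ⟨hiE', C, hC, hCs, hCle⟩ := hiEx
    have hia : i ≠ a := fun h => ha.2 (by rw [← h]; exact ⟨hiA, hiE', C, hC, hCs, hCle⟩)
    have hiD : i ∈ D := mem_insert_of_mem _ ⟨hiA, fun h => hia (mem_singleton_iff.mp h)⟩
    have hiE : i ∈ M.E := hA.subset_ground hiA
    have hiC : i ∈ C := Matroid.cct_insert_mem hBd.indep hC hCs
    refine ⟨hiD, ⟨hiE, fun h => h.2 hiD⟩, ?_⟩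
    by_cases hdC : d ∈ C
    · have hiCa : i ∉ Ca := fun h =>
        (mem_insert_iff.mp (hCas h)).elim hia (fun h' => h'.2 hiA)
      have hne : C ≠ Ca := fun h => hiCa (h ▸ hiC)
      have hdep := Matroid.cct_elim hC hCa hne hdC hdCa
      obtain ⟨C', hC's, hC'⟩ := hdep.exists_cct
      have hdi : d < i := lt_of_le_of_ne (hCle d hdC) (fun h => hdA (by rw [h]; exact hiA))
      refine ⟨C', hC', ?_, ?_⟩
      · intro x hx
        obtain ⟨hx1, hx2⟩ := hC's hx
        rcases hx1 with hxC | hxCa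
        · rcases mem_insert_iff.mp (hCs hxC) with h | h
          · exact h ▸ mem_insert _ _
          · refine mem_insert_of_mem _ ?_
            rw [hED]
            exact mem_insert_of_mem _ ⟨h, hx2⟩
        · rcases mem_insert_iff.mp (hCas hxCa) with h | h
          · refine mem_insert_of_mem _ ?_
            rw [hED, h]
            exact mem_insert _ _
          · refine mem_insert_of_mem _ ?_
            rw [hED]
            exact mem_insert_of_mem _ ⟨h, hx2⟩
      · intro x hx
        obtain ⟨hx1, _⟩ := hC's hx
        rcases hx1 with hxC | hxCa
        · exact hCle x hxC
        · exact le_of_lt (lt_of_le_of_lt (hfled x hxCa) hdi)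
    · refine ⟨C, hC, ?_, hCle⟩
      intro x hx
      rcases mem_insert_iff.mp (hCs hx) with h | h
      · exact h ▸ mem_insert _ _
      · refine mem_insert_of_mem _ ?_
        rw [hED]
        exact mem_insert_of_mem _ ⟨h, fun hxd => hdC (by rw [← mem_singleton_iff.mp hxd]; exact hx)⟩
  have hnoB : ¬ ∃ B, M.IntRelated D B ∧ M.IntRelated A B := by
    rintro ⟨B, ⟨hBbase, Y₁, hY₁, hDeq⟩, ⟨-, Y₂, hY₂, hAeq⟩⟩
    have hAB : A = B := hA.eq_of_subset_isBase hBbase (by rw [hAeq]; exact diff_subset)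
    have hDB : D ⊆ A := by rw [hAB, hDeq]; exact diff_subset
    exact hDA (hD.eq_of_subset_isBase hA hDB)
  have hcont : (D \ M.inA D) ∪ M.exA D ⊆ (A \ M.inA A) ∪ M.exA A := by
    rintro x (⟨hxD, hxn⟩ | hxE)
    · rcases mem_insert_iff.mp hxD with rfl | hxA'
      · exact absurd hdact hxn
      · exact Or.inl ⟨hxA'.1, fun hact => hxn (hG3 hact)⟩
    · obtain ⟨⟨hxE', hxD⟩, C, hC, hCs, hCle⟩ := hxE
      by_cases hxa : x = a
      · subst hxa
        exact Or.inl ha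
      · have hxA : x ∉ A := fun h =>
          hxD (mem_insert_of_mem _ ⟨h, fun h' => hxa (mem_singleton_iff.mp h')⟩)
        have hxC : x ∈ C := Matroid.cct_insert_mem hD.indep hC hCs
        by_cases hdC : d ∈ C
        · exfalso
          have hdx : d < x := lt_of_le_of_ne (hCle d hdC)
            (fun h => hxD (by rw [← h]; exact mem_insert _ _))
          have hb := Matroid.cct_exchange_base hD hxE' hxD hC hCs hdC (ne_of_lt hdx)
          have hDd' : D \ {d} = A \ {a} := by
            rw [hDdef, insert_diff_self_of_notMem]
            exact fun h => hdA h.1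
          rw [hDd'] at hb
          exact absurd (hmax x hxa hb) (not_le.mpr hdx)
        · refine Or.inr ⟨⟨hxE', hxA⟩, C, hC, ?_, hCle⟩
          intro y hy
          rcases mem_insert_iff.mp (hCs hy) with h | h
          · exact h ▸ mem_insert _ _
          · rcases mem_insert_iff.mp h with h' | h'
            · exact absurd (by rwa [h'] at hy) hdC
            · exact mem_insert_of_mem _ h'.1
  exact ⟨Or.inr ⟨hnoB, hcont⟩, hDA, hG3⟩
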